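/- Deterministic single-epoch bound: under value mirror descent with constant stepsize η > 0 over T iterations, the iterates satisfy (V_T − V*) + ∑_{t=1}^{T-1} (I − γP_{π*})(V_t − V*) + (1/η) D_{π_T}^{π*} ≤ (1/η) D_{π_0}^{π*} + γP_{π*}(V_0 − V*) componentwise, where D_{π}^{π*} ∈ ℝ^{|S|} has entries D(π(·|s), π*(·|s)). -/

import Mathlib

/-- The policy Bellman operator `(Γ_π V)(s) = ⟨c(s,·) + γ P_s V, π(·|s)⟩ + h(π(·|s))`. -/
noncomputable def Bellman {S A : Type*} [Fintype S] [Fintype A]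
    (c : S → A → ℝ) (P : S → A → S → ℝ) (h : (A → ℝ) → ℝ) (γ : ℝ)
    (π : S → A → ℝ) (V : S → ℝ) (s : S) : ℝ :=
  (∑ a, π s a * (c s a + γ * ∑ s', P s a s' * V s')) + h (π s)

/-- Deterministic single-epoch bound for value mirror descent with constant
stepsize `η > 0` over `T ≥ 1` iterations (assuming the three-point lemma for each prox
step): componentwise,
`(V_T − V*) + ∑_{t=1}^{T-1} (I − γP_{π*})(V_t − V*) + (1/η) D_{π_T}^{π*}
  ≤ (1/η) D_{π_0}^{π*} + γ P_{π*}(V_0 − V*)`. -/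
theorem vmd_single_epoch_bound
    {S A : Type*} [Fintype S] [Fintype A]
    (γ : ℝ) (hγ0 : 0 < γ) (hγ1 : γ < 1)
    (c : S → A → ℝ) (P : S → A → S → ℝ)
    (hP0 : ∀ s a s', 0 ≤ P s a s') (hP1 : ∀ s a, ∑ s', P s a s' = 1)
    (h : (A → ℝ) → ℝ)
    (D : (A → ℝ) → (A → ℝ) → ℝ) (hD : ∀ x y, 0 ≤ D x y)
    (T : ℕ) (hT : 1 ≤ T) (η : ℝ) (hη : 0 < η)
    (π : ℕ → S → A → ℝ) (hπ : ∀ t s, π t s ∈ stdSimplex ℝ A)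
    (V : ℕ → S → ℝ)
    (hthree : ∀ t < T, ∀ s, ∀ p ∈ stdSimplex ℝ A,
      η * ((∑ a, (c s a + γ * ∑ s', P s a s' * V t s') * (π (t + 1) s a - p a))
            + h (π (t + 1) s) - h p) + D (π t s) (π (t + 1) s)
        ≤ D (π t s) p - D (π (t + 1) s) p)
    (hupd : ∀ t < T, ∀ s, V (t + 1) s = Bellman c P h γ (π (t + 1)) (V t) s)
    (πstar : S → A → ℝ) (hπstar : ∀ s, πstar s ∈ stdSimplex ℝ A)
    (Vstar : S → ℝ) (hVstar : ∀ s, Vstar s = Bellman c P h γ πstar Vstar s) :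
    ∀ s, (V T s - Vstar s)
        + (∑ t ∈ Finset.Ico 1 T, ((V t s - Vstar s)
            - γ * ∑ s', (∑ a, πstar s a * P s a s') * (V t s' - Vstar s')))
        + (1 / η) * D (π T s) (πstar s)
      ≤ (1 / η) * D (π 0 s) (πstar s)
        + γ * ∑ s', (∑ a, πstar s a * P s a s') * (V 0 s' - Vstar s') := by
  intro s
  -- abbreviations
  set f : ℕ → ℝ := fun t => V t s - Vstar s with hf
  set g : ℕ → ℝ := fun t =>
    γ * ∑ s', (∑ a, πstar s a * P s a s') * (V t s' - Vstar s') with hg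
  set E : ℕ → ℝ := fun t => (1 / η) * D (π t s) (πstar s) with hE
  -- swap lemma
  have swap : ∀ (W : S → ℝ),
      ∑ a, πstar s a * (γ * ∑ s', P s a s' * W s')
        = γ * ∑ s', (∑ a, πstar s a * P s a s') * W s' := by
    intro W
    have h1 : ∀ a, πstar s a * (γ * ∑ s', P s a s' * W s')
        = ∑ s', γ * (πstar s a * P s a s' * W s') := by
      intro a
      rw [Finset.mul_sum, Finset.mul_sum]
      exact Finset.sum_congr rfl fun _ _ => by ring
    simp_rw [h1]
    rw [Finset.sum_comm, Finset.mul_sum]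
    exact Finset.sum_congr rfl fun s' _ => by rw [Finset.sum_mul, Finset.mul_sum]
  -- per-step key inequality
  have key : ∀ t < T, f (t + 1) - g t ≤ E t - E (t + 1) := by
    intro t ht
    have h3 := hthree t ht s (πstar s) (hπstar s)
    have hV := hupd t ht s
    have hVfix := hVstar s
    have e1 : (∑ a, (c s a + γ * ∑ s', P s a s' * V t s') * (π (t + 1) s a - πstar s a))
          + h (π (t + 1) s) - h (πstar s) = f (t + 1) - g t := by
      have expand : ∑ a, πstar s a * (c s a + γ * ∑ s', P s a s' * V t s')
          = (∑ a, πstar s a * (c s a + γ * ∑ s', P s a s' * Vstar s')) + g t := by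
        have hswap := swap (fun s' => V t s' - Vstar s')
        have hgt : g t = γ * ∑ s', (∑ a, πstar s a * P s a s') * (V t s' - Vstar s') := rfl
        rw [hgt, ← hswap]
        rw [← Finset.sum_add_distrib]
        refine Finset.sum_congr rfl fun a _ => ?_
        have : ∑ s', P s a s' * (V t s' - Vstar s')
            = (∑ s', P s a s' * V t s') - ∑ s', P s a s' * Vstar s' := by
          rw [← Finset.sum_sub_distrib]
          exact Finset.sum_congr rfl fun s' _ => by ring
        rw [this]; ring
      have hsub : ∑ a, (c s a + γ * ∑ s', P s a s' * V t s') * (π (t + 1) s a - πstar s a)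
          = (∑ a, π (t + 1) s a * (c s a + γ * ∑ s', P s a s' * V t s'))
            - ∑ a, πstar s a * (c s a + γ * ∑ s', P s a s' * V t s') := by
        rw [← Finset.sum_sub_distrib]
        exact Finset.sum_congr rfl fun a _ => by ring
      rw [hsub, expand]
      rw [hf]
      simp only [hV, hVfix, Bellman]
      ring
    rw [e1] at h3
    have hDnn := hD (π t s) (π (t + 1) s)
    have hEt : ∀ u, E u = (1 / η) * D (π u s) (πstar s) := fun u => rfl
    rw [hEt, hEt]
    rw [div_mul_eq_mul_div, div_mul_eq_mul_div, ← sub_div, le_div_iff₀ hη]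
    nlinarith
  -- sum over t ∈ range T
  have sum_key : ∑ t ∈ Finset.range T, (f (t + 1) - g t)
      ≤ ∑ t ∈ Finset.range T, (E t - E (t + 1)) :=
    Finset.sum_le_sum fun t ht => key t (Finset.mem_range.mp ht)
  have tel : ∑ t ∈ Finset.range T, (E t - E (t + 1)) = E 0 - E T :=
    Finset.sum_range_sub' E T
  have split : ∑ t ∈ Finset.range T, (f (t + 1) - g t)
      = (f T + ∑ t ∈ Finset.Ico 1 T, f t) - (g 0 + ∑ t ∈ Finset.Ico 1 T, g t) := by
    rw [Finset.sum_sub_distrib]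
    congr 1
    · have h1 : ∑ t ∈ Finset.range T, f (t + 1) = ∑ t ∈ Finset.Ico 1 (T + 1), f t := by
        rw [Finset.sum_Ico_eq_sum_range]
        simp [add_comm]
      rw [h1, Finset.sum_Ico_succ_top hT]
      ring
    · obtain ⟨n, rfl⟩ : ∃ n, T = n + 1 := ⟨T - 1, (Nat.succ_pred_eq_of_pos hT).symm⟩
      rw [Finset.sum_range_succ']
      have h2 : ∑ t ∈ Finset.Ico 1 (n + 1), g t = ∑ t ∈ Finset.range n, g (t + 1) := by
        rw [Finset.sum_Ico_eq_sum_range]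
        simp [add_comm]
      rw [h2]
      ring
  have hIco : ∑ t ∈ Finset.Ico 1 T, (f t - g t)
      = (∑ t ∈ Finset.Ico 1 T, f t) - ∑ t ∈ Finset.Ico 1 T, g t :=
    Finset.sum_sub_distrib _ _
  have goal' : f T + ∑ t ∈ Finset.Ico 1 T, (f t - g t) + E T ≤ E 0 + g 0 := by
    rw [hIco]; linarith [sum_key, tel, split.symm.le, split.le]
  simpa [hf, hg, hE] using goal'
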